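/- arXiv:0710.1975 — 2 statements merged into one kernel-verified Lean document; each statement's English description precedes it below -/
import Mathlib

section
/- For n ≥ 2 and 0 < r < π, the function r ↦ (∫_0^r sin^{n-1}(t) dt) / sin^{n-1}(r) is strictly increasing on (0, π). -/
open Real Set

private lemma cap_F_hasDerivAt (m : ℕ) (r : ℝ) :
    HasDerivAt (fun u : ℝ => ∫ t in (0:ℝ)..u, Real.sin t ^ m) (Real.sin r ^ m) r := by
  have hc : Continuous fun t : ℝ => Real.sin t ^ m := Real.continuous_sin.pow m
  exact intervalIntegral.integral_hasDerivAt_right (hc.intervalIntegrable _ _)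
    (hc.stronglyMeasurableAtFilter _ _) hc.continuousAt

private lemma cap_F_pos (m : ℕ) {r : ℝ} (hr : r ∈ Set.Ioo 0 Real.pi) :
    0 < ∫ t in (0:ℝ)..r, Real.sin t ^ m := by
  refine intervalIntegral.intervalIntegral_pos_of_pos_on
    ((Real.continuous_sin.pow m).intervalIntegrable _ _) (fun x hx => ?_) hr.1
  exact pow_pos (Real.sin_pos_of_pos_of_lt_pi hx.1 (hx.2.trans hr.2)) m

private lemma cap_key (m : ℕ) (hm : 1 ≤ m) {r : ℝ} (hr : r ∈ Set.Ioo 0 Real.pi) :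
    (m : ℝ) * Real.cos r * (∫ t in (0:ℝ)..r, Real.sin t ^ m) < Real.sin r ^ (m + 1) := by
  have hsin : 0 < Real.sin r := Real.sin_pos_of_pos_of_lt_pi hr.1 hr.2
  have hFpos := cap_F_pos m hr
  rcases le_or_gt (Real.cos r) 0 with hc | hc
  · have h1 : (m : ℝ) * Real.cos r * (∫ t in (0:ℝ)..r, Real.sin t ^ m) ≤ 0 := by
      apply mul_nonpos_of_nonpos_of_nonneg
      · exact mul_nonpos_of_nonneg_of_nonpos (by positivity) hc
      · exact hFpos.le
    exact h1.trans_lt (pow_pos hsin _)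
  · -- r < π/2 here
    have hrlt : r < Real.pi / 2 := by
      by_contra h
      push_neg at h
      exact absurd (Real.cos_nonpos_of_pi_div_two_le_of_le h (by linarith [hr.2, Real.pi_pos])) (not_le.mpr hc)
    set g : ℝ → ℝ := fun x => Real.sin x ^ (m + 1) -
      (m : ℝ) * Real.cos x * (∫ t in (0:ℝ)..x, Real.sin t ^ m) with hg
    have hgd : ∀ x : ℝ, HasDerivAt g
        (((m:ℝ)+1) * Real.sin x ^ m * Real.cos x -
          (((m:ℝ) * (-Real.sin x)) * (∫ t in (0:ℝ)..x, Real.sin t ^ m) +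
            ((m:ℝ) * Real.cos x) * Real.sin x ^ m)) x := by
      intro x
      have h1 : HasDerivAt (fun y : ℝ => Real.sin y ^ (m+1))
          (((m:ℝ)+1) * Real.sin x ^ m * Real.cos x) x := by
        have := (Real.hasDerivAt_sin x).fun_pow (m+1)
        simpa using this
      have h2 : HasDerivAt (fun y : ℝ => (m:ℝ) * Real.cos y) ((m:ℝ) * (-Real.sin x)) x :=
        (Real.hasDerivAt_cos x).const_mul _
      exact h1.sub (h2.mul (cap_F_hasDerivAt m x))
    have hmono : StrictMonoOn g (Set.Icc 0 (Real.pi / 2)) := by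
      apply strictMonoOn_of_deriv_pos (convex_Icc _ _)
        (fun x _ => ((hgd x).continuousAt).continuousWithinAt)
      intro x hx
      rw [interior_Icc] at hx
      rw [(hgd x).deriv]
      have hsx : 0 < Real.sin x := Real.sin_pos_of_pos_of_lt_pi hx.1
        (hx.2.trans (by linarith [Real.pi_pos]))
      have hcx : 0 < Real.cos x := Real.cos_pos_of_mem_Ioo
        ⟨by linarith [hx.1, Real.pi_pos], hx.2⟩
      have hFx : 0 < ∫ t in (0:ℝ)..x, Real.sin t ^ m :=
        cap_F_pos m ⟨hx.1, hx.2.trans (by linarith [Real.pi_pos])⟩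
      have hsp : 0 < Real.sin x ^ m := pow_pos hsx m
      have hm0 : (0:ℝ) < m := by exact_mod_cast hm
      nlinarith [mul_pos hsp hcx, mul_pos (mul_pos hm0 hsx) hFx]
    have hg0 : g 0 = 0 := by
      simp [hg, Real.sin_zero, zero_pow (Nat.succ_ne_zero m)]
    have := hmono (Set.left_mem_Icc.mpr (by linarith [Real.pi_pos]))
      ⟨hr.1.le, hrlt.le⟩ hr.1
    rw [hg0] at this
    simp only [hg] at this
    linarith

/-- For `n ≥ 2`, the volume-to-perimeter ratio of spherical caps in the unit `n`-sphere,
`r ↦ (∫₀ʳ sin^{n-1} t dt) / sin^{n-1} r`, is strictly increasing on `(0, π)`. -/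
theorem cap_ratio_strictMonoOn (n : ℕ) (hn : 2 ≤ n) :
    StrictMonoOn
      (fun r : ℝ => (∫ t in (0:ℝ)..r, Real.sin t ^ (n - 1)) / Real.sin r ^ (n - 1))
      (Set.Ioo 0 Real.pi) := by
  set m := n - 1 with hmdef
  have hm : 1 ≤ m := by omega
  have hderiv : ∀ r ∈ Set.Ioo 0 Real.pi,
      HasDerivAt (fun r : ℝ => (∫ t in (0:ℝ)..r, Real.sin t ^ m) / Real.sin r ^ m)
        ((Real.sin r ^ m * Real.sin r ^ m -
            (∫ t in (0:ℝ)..r, Real.sin t ^ m) * ((m:ℝ) * Real.sin r ^ (m-1) * Real.cos r)) /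
          (Real.sin r ^ m) ^ 2) r := by
    intro r hr
    have hsin : 0 < Real.sin r := Real.sin_pos_of_pos_of_lt_pi hr.1 hr.2
    exact (cap_F_hasDerivAt m r).div ((Real.hasDerivAt_sin r).pow m) (by positivity)
  apply strictMonoOn_of_deriv_pos (convex_Ioo _ _)
    (fun x hx => ((hderiv x hx).continuousAt).continuousWithinAt)
  intro x hx
  rw [interior_Ioo] at hx
  rw [(hderiv x hx).deriv]
  have hsin : 0 < Real.sin x := Real.sin_pos_of_pos_of_lt_pi hx.1 hx.2
  have hkey := cap_key m hm hx
  have hps : 0 < Real.sin x ^ (m - 1) := pow_pos hsin _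
  have h1 : Real.sin x ^ (m-1) * ((m:ℝ) * Real.cos x * (∫ t in (0:ℝ)..x, Real.sin t ^ m))
      < Real.sin x ^ (m-1) * Real.sin x ^ (m+1) := by
    exact mul_lt_mul_of_pos_left hkey hps
  have h2 : Real.sin x ^ (m-1) * Real.sin x ^ (m+1) = Real.sin x ^ m * Real.sin x ^ m := by
    rw [← pow_add, ← pow_add]
    congr 1
    omega
  apply div_pos _ (by positivity)
  nlinarith [h1, h2]
end

section
/- Let f(t) = cos(t) - h·sin(t) for a real constant h ≥ cot(r_0) with 0 < r_0 < π. Then the first positive zero t_0 of f satisfies t_0 ≤ r_0, and ∫_0^{t_0} max(f(t),0)^{n-1} dt ≤ ∫_0^{r_0} (cos t - cot(r_0) sin t)^{n-1} dt for n ≥ 2. -/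
open Real

/-- One-dimensional Heintze–Karcher comparison: for `f t = cos t - h sin t` with
`h ≥ cot r₀`, `0 < r₀ < π`, the first positive zero `t₀` of `f` satisfies `t₀ ≤ r₀`, and
`∫₀^{t₀} (f t)₊^{n-1} dt ≤ ∫₀^{r₀} (cos t - cot r₀ · sin t)^{n-1} dt` for `n ≥ 2`. -/
theorem heintze_karcher_one_dim (n : ℕ) (hn : 2 ≤ n) (h r₀ t₀ : ℝ)
    (hr₀ : 0 < r₀) (hr₀' : r₀ < Real.pi) (hh : Real.cot r₀ ≤ h)
    (f : ℝ → ℝ) (hf : ∀ t, f t = Real.cos t - h * Real.sin t)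
    (ht₀ : 0 < t₀) (hzero : f t₀ = 0)
    (hfirst : ∀ t, 0 < t → t < t₀ → f t ≠ 0) :
    t₀ ≤ r₀ ∧
      (∫ t in (0:ℝ)..t₀, max (f t) 0 ^ (n - 1)) ≤
        ∫ t in (0:ℝ)..r₀, (Real.cos t - Real.cot r₀ * Real.sin t) ^ (n - 1) := by
  have hfe : f = fun t => Real.cos t - h * Real.sin t := funext hf
  have hsinr : 0 < Real.sin r₀ := Real.sin_pos_of_pos_of_lt_pi hr₀ hr₀'
  have hcot : Real.cot r₀ = Real.cos r₀ / Real.sin r₀ := Real.cot_eq_cos_div_sin r₀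
  set g : ℝ → ℝ := fun t => Real.cos t - Real.cot r₀ * Real.sin t with hg
  -- g t = sin (r₀ - t) / sin r₀
  have hgform : ∀ t, g t = Real.sin (r₀ - t) / Real.sin r₀ := by
    intro t
    rw [hg]
    simp only
    rw [Real.sin_sub, hcot]
    field_simp
  have hgnonneg : ∀ t ∈ Set.Icc (0:ℝ) r₀, 0 ≤ g t := by
    intro t ht
    rw [hgform]
    apply div_nonneg _ hsinr.le
    apply Real.sin_nonneg_of_nonneg_of_le_pi
    · linarith [ht.2]
    · linarith [ht.1]
  -- f r₀ ≤ 0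
  have hfr₀ : f r₀ ≤ 0 := by
    rw [hf]
    have hgr : g r₀ = 0 := by rw [hgform]; simp
    have : h * Real.sin r₀ ≥ Real.cot r₀ * Real.sin r₀ :=
      mul_le_mul_of_nonneg_right hh hsinr.le
    rw [hg] at hgr; simp only at hgr
    linarith
  have hcont : Continuous f := by rw [hfe]; continuity
  -- first: t₀ ≤ r₀
  have ht₀r₀ : t₀ ≤ r₀ := by
    by_contra hlt
    push_neg at hlt
    have h0 : f 0 = 1 := by rw [hf]; simp
    have : (0:ℝ) ∈ Set.Icc (f r₀) (f 0) := by
      constructor <;> simp [hfr₀, h0]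
    obtain ⟨s, hs, hfs⟩ := intermediate_value_Icc' hr₀.le hcont.continuousOn this
    have hspos : 0 < s := by
      rcases lt_or_eq_of_le hs.1 with h' | h'
      · exact h'
      · exfalso; rw [← h'] at hfs; rw [h0] at hfs; norm_num at hfs
    exact hfirst s hspos (lt_of_le_of_lt hs.2 hlt) hfs
  refine ⟨ht₀r₀, ?_⟩
  have hfi : IntervalIntegrable (fun t => max (f t) 0 ^ (n - 1)) MeasureTheory.volume 0 t₀ := by
    apply Continuous.intervalIntegrable
    exact (hcont.max continuous_const).pow _
  have hgcont : Continuous g := by rw [hg]; continuity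
  have hgi : ∀ a b : ℝ, IntervalIntegrable (fun t => g t ^ (n - 1)) MeasureTheory.volume a b := by
    intro a b
    exact (hgcont.pow _).intervalIntegrable a b
  have step1 : (∫ t in (0:ℝ)..t₀, max (f t) 0 ^ (n - 1)) ≤
      ∫ t in (0:ℝ)..t₀, g t ^ (n - 1) := by
    apply intervalIntegral.integral_mono_on ht₀.le hfi (hgi 0 t₀)
    intro t ht
    have htr : t ∈ Set.Icc (0:ℝ) r₀ := ⟨ht.1, le_trans ht.2 ht₀r₀⟩
    have hsin : 0 ≤ Real.sin t := by
      apply Real.sin_nonneg_of_nonneg_of_le_pi ht.1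
      linarith [htr.2]
    have hfg : f t ≤ g t := by
      rw [hf, hg]
      simp only
      have := mul_le_mul_of_nonneg_right hh hsin
      linarith
    have hmax : max (f t) 0 ≤ g t := max_le hfg (hgnonneg t htr)
    exact pow_le_pow_left₀ (le_max_right _ _) hmax _
  have step2 : (∫ t in (0:ℝ)..t₀, g t ^ (n - 1)) ≤ ∫ t in (0:ℝ)..r₀, g t ^ (n - 1) := by
    apply intervalIntegral.integral_mono_interval (le_refl (0:ℝ)) ht₀.le ht₀r₀
    · filter_upwards [MeasureTheory.ae_restrict_mem measurableSet_Ioc] with t ht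
      exact pow_nonneg (hgnonneg t ⟨ht.1.le, ht.2⟩) _
    · exact hgi 0 r₀
  calc (∫ t in (0:ℝ)..t₀, max (f t) 0 ^ (n - 1)) ≤ ∫ t in (0:ℝ)..t₀, g t ^ (n - 1) := step1
    _ ≤ ∫ t in (0:ℝ)..r₀, g t ^ (n - 1) := step2
    _ = ∫ t in (0:ℝ)..r₀, (Real.cos t - Real.cot r₀ * Real.sin t) ^ (n - 1) := rfl
end
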